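/- For every simple regular expression E₁ over an alphabet α, the number of distinct sets ∂_w(E₁*) for w ranging over nonempty words over α is at most 2 raised to the number of distinct sets ∂_w(E₁) for w ranging over nonempty words over α. -/

import Mathlib

open scoped Classical

/-- The Antimirov partial derivative of a regular expression with respect to a symbol. -/
noncomputable def aderiv {α : Type*} (a : α) : RegularExpression α → Set (RegularExpression α)
  | .zero => ∅
  | .epsilon => ∅
  | .char b => if b = a then {1} else ∅
  | .plus E₁ E₂ => aderiv a E₁ ∪ aderiv a E₂
  | .comp E₁ E₂ =>
      if [] ∈ E₁.matches' then ((· * E₂) '' aderiv a E₁) ∪ aderiv a E₂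
      else (· * E₂) '' aderiv a E₁
  | .star E₁ => (· * E₁.star) '' aderiv a E₁

/-- Iterated Antimirov partial derivative with respect to a word. -/
noncomputable def aderivWord {α : Type*} : List α → RegularExpression α → Set (RegularExpression α)
  | [], E => {E}
  | a :: w, E => ⋃ F ∈ aderiv a E, aderivWord w F

/-- Left quotient of a language by a word. -/
def lquot {α : Type*} (w : List α) (L : Language α) : Language α := {v | w ++ v ∈ L}

-- support
def supp {α : Type*} : RegularExpression α → Set (RegularExpression α)
  | .zero => ∅
  | .epsilon => ∅
  | .char _ => {1}
  | .plus E₁ E₂ => supp E₁ ∪ supp E₂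
  | .comp E₁ E₂ => ((· * E₂) '' supp E₁) ∪ supp E₂
  | .star E₁ => (· * E₁.star) '' supp E₁

lemma supp_finite {α : Type*} (E : RegularExpression α) : (supp E).Finite := by
  induction E with
  | zero => exact Set.finite_empty
  | epsilon => exact Set.finite_empty
  | char _ => exact Set.finite_singleton _
  | plus E₁ E₂ ih₁ ih₂ => exact ih₁.union ih₂
  | comp E₁ E₂ ih₁ ih₂ => exact (ih₁.image _).union ih₂
  | star E₁ ih => exact ih.image _

lemma aderiv_subset_supp {α : Type*} (a : α) (E : RegularExpression α) :
    aderiv a E ⊆ supp E := by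
  induction E with
  | zero => exact subset_rfl
  | epsilon => exact subset_rfl
  | char b =>
      simp only [aderiv, supp]
      split <;> simp
  | plus E₁ E₂ ih₁ ih₂ => exact Set.union_subset_union ih₁ ih₂
  | comp E₁ E₂ ih₁ ih₂ =>
      simp only [aderiv, supp]
      split
      · exact Set.union_subset_union (Set.image_mono ih₁) ih₂
      · exact (Set.image_mono ih₁).trans Set.subset_union_left
  | star E₁ ih => exact Set.image_mono ih

lemma aderiv_supp_subset {α : Type*} (a : α) (E : RegularExpression α) :
    ∀ G ∈ supp E, aderiv a G ⊆ supp E := by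
  induction E with
  | zero => intro G hG; simp [supp] at hG
  | epsilon => intro G hG; simp [supp] at hG
  | char b =>
      intro G hG
      simp only [supp, Set.mem_singleton_iff] at hG
      subst hG
      simp [aderiv]
  | plus E₁ E₂ ih₁ ih₂ =>
      rintro G (hG | hG)
      · exact (ih₁ G hG).trans Set.subset_union_left
      · exact (ih₂ G hG).trans Set.subset_union_right
  | comp E₁ E₂ ih₁ ih₂ =>
      rintro G (⟨H, hH, rfl⟩ | hG)
      · show aderiv a (H.comp E₂) ⊆ _
        simp only [aderiv]
        split
        · exact Set.union_subset_union (Set.image_mono (ih₁ H hH))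
            (aderiv_subset_supp a E₂)
        · exact (Set.image_mono (ih₁ H hH)).trans Set.subset_union_left
      · exact ((ih₂ G hG).trans Set.subset_union_right)
  | star E₁ ih =>
      rintro G ⟨H, hH, rfl⟩
      show aderiv a (H.comp E₁.star) ⊆ _
      simp only [aderiv]
      split
      · refine Set.union_subset ?_ ?_
        · exact Set.image_mono (ih H hH)
        · exact Set.image_mono (aderiv_subset_supp a E₁)
      · exact Set.image_mono (ih H hH)


lemma aderivWord_append {α : Type*} (w₁ w₂ : List α) (E : RegularExpression α) :
    aderivWord (w₁ ++ w₂) E = ⋃ F ∈ aderivWord w₁ E, aderivWord w₂ F := by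
  induction w₁ generalizing E with
  | nil => simp [aderivWord]
  | cons a w ih =>
      ext x
      simp only [List.cons_append, aderivWord, Set.mem_iUnion, ih, exists_prop]
      aesop

lemma aderivWord_singleton {α : Type*} (a : α) (E : RegularExpression α) :
    aderivWord [a] E = aderiv a E := by
  simp [aderivWord]

lemma aderivWord_subset_supp {α : Type*} (E : RegularExpression α) :
    ∀ (w : List α) (F : RegularExpression α), F ∈ supp E → aderivWord w F ⊆ supp E := by
  intro w
  induction w with
  | nil => intro F hF; simpa [aderivWord] using hF
  | cons b w ih =>
      intro F hF
      simp only [aderivWord]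
      refine Set.iUnion₂_subset fun G hG => ih G ?_
      exact aderiv_supp_subset b E F hF hG

lemma aderiv_comp_star {α : Type*} (b : α) (G E₁ : RegularExpression α) :
    aderiv b (G * E₁.star) =
      (· * E₁.star) '' (aderiv b G ∪ {x | x ∈ aderiv b E₁ ∧ [] ∈ G.matches'}) := by
  show aderiv b (G.comp E₁.star) = _
  simp only [aderiv]
  split
  · next h =>
      have : {x | x ∈ aderiv b E₁ ∧ [] ∈ G.matches'} = aderiv b E₁ := by
        ext x; simp [h]
      rw [this, Set.image_union]
  · next h =>
      have : {x | x ∈ aderiv b E₁ ∧ [] ∈ G.matches'} = ∅ := by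
        ext x; simp [h]
      rw [this, Set.union_empty]

lemma star_structure {α : Type*} (E₁ : RegularExpression α) (a : α) (w : List α) :
    ∃ U : Set (Set (RegularExpression α)),
      (∀ T ∈ U, ∃ (b : α) (v : List α), T = aderivWord (b :: v) E₁) ∧
      aderivWord (a :: w) E₁.star = (· * E₁.star) '' ⋃₀ U := by
  induction w using List.reverseRecOn with
  | nil =>
      refine ⟨{aderiv a E₁}, ?_, ?_⟩
      · rintro T rfl
        exact ⟨a, [], (aderivWord_singleton a E₁).symm⟩
      · rw [show aderivWord [a] E₁.star = aderiv a E₁.star from aderivWord_singleton _ _]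
        simp [aderiv]
  | append_singleton v b ih =>
      obtain ⟨U, hU1, hU2⟩ := ih
      refine ⟨((fun T => ⋃ G ∈ T, aderiv b G) '' U) ∪
        {S | S = aderiv b E₁ ∧ ∃ G ∈ ⋃₀ U, [] ∈ G.matches'}, ?_, ?_⟩
      · rintro T (⟨T', hT', rfl⟩ | ⟨rfl, -⟩)
        · obtain ⟨c, u, rfl⟩ := hU1 T' hT'
          refine ⟨c, u ++ [b], ?_⟩
          rw [show (c :: (u ++ [b])) = (c :: u) ++ [b] by simp, aderivWord_append]
          simp [aderivWord_singleton]
        · exact ⟨b, [], (aderivWord_singleton b E₁).symm⟩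
      · rw [show (a :: (v ++ [b])) = (a :: v) ++ [b] by simp, aderivWord_append, hU2]
        rw [Set.biUnion_image]
        calc (⋃ G ∈ ⋃₀ U, aderivWord [b] (G * E₁.star))
            = ⋃ G ∈ ⋃₀ U, (· * E₁.star) ''
                (aderiv b G ∪ {x | x ∈ aderiv b E₁ ∧ [] ∈ G.matches'}) := by
              refine Set.iUnion₂_congr fun G _ => ?_
              rw [aderivWord_singleton, aderiv_comp_star]
          _ = (· * E₁.star) '' ⋃ G ∈ ⋃₀ U,
                (aderiv b G ∪ {x | x ∈ aderiv b E₁ ∧ [] ∈ G.matches'}) := by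
              simp [Set.image_iUnion]
          _ = _ := by
              have hsets : (⋃ G ∈ ⋃₀ U,
                  (aderiv b G ∪ {x | x ∈ aderiv b E₁ ∧ [] ∈ G.matches'})) =
                  ⋃₀ (((fun T => ⋃ G ∈ T, aderiv b G) '' U) ∪
                    {S | S = aderiv b E₁ ∧ ∃ G ∈ ⋃₀ U, [] ∈ G.matches'}) := by
                ext x
                simp only [Set.mem_iUnion, Set.mem_union, Set.mem_setOf_eq, Set.mem_sUnion,
                  exists_prop, Set.sUnion_union, Set.sUnion_image]
                constructor
                · rintro ⟨G, ⟨T, hT, hG⟩, hx | ⟨hx, hε⟩⟩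
                  · exact Or.inl ⟨T, hT, G, hG, hx⟩
                  · exact Or.inr ⟨aderiv b E₁, ⟨rfl, G, ⟨T, hT, hG⟩, hε⟩, hx⟩
                · rintro (hx | ⟨S, ⟨rfl, G, hG, hε⟩, hx⟩)
                  · obtain ⟨T, hT, G, hG, hx⟩ := hx
                    exact ⟨G, ⟨T, hT, hG⟩, Or.inl hx⟩
                  · exact ⟨G, hG, Or.inr ⟨hx, hε⟩⟩
              rw [hsets]

lemma ncard_subsets {β : Type*} {s : Set β} (hs : s.Finite) :
    {t | t ⊆ s}.ncard = 2 ^ s.ncard := by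
  classical
  have h : {t | t ⊆ s} = (fun u : Finset β => (u : Set β)) '' ↑hs.toFinset.powerset := by
    ext t
    simp only [Set.mem_setOf_eq, Set.mem_image, Finset.mem_coe, Finset.mem_powerset]
    constructor
    · intro ht
      refine ⟨(hs.subset ht).toFinset, ?_, by simp⟩
      intro x hx
      rw [Set.Finite.mem_toFinset] at hx
      exact hs.mem_toFinset.mpr (ht hx)
    · rintro ⟨u, hu, rfl⟩
      intro x hx
      exact hs.mem_toFinset.mp (hu (Finset.mem_coe.mp hx))
  rw [h, Set.ncard_image_of_injective _ (fun u v huv => Finset.coe_injective huv),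
    Set.ncard_coe_finset, Finset.card_powerset, Set.ncard_eq_toFinset_card _ hs]


theorem antimirov_star_card {α : Type*} (E₁ : RegularExpression α) :
    {S | ∃ (a : α) (w : List α), S = aderivWord (a :: w) E₁.star}.ncard ≤
      2 ^ {S | ∃ (a : α) (w : List α), S = aderivWord (a :: w) E₁}.ncard := by
  classical
  set D := {S | ∃ (a : α) (w : List α), S = aderivWord (a :: w) E₁} with hD
  have hDsub : D ⊆ {t | t ⊆ supp E₁} := by
    rintro S ⟨a, w, rfl⟩
    intro x hx
    simp only [aderivWord, Set.mem_iUnion, exists_prop] at hx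
    obtain ⟨F, hF, hx⟩ := hx
    exact aderivWord_subset_supp E₁ w F (aderiv_subset_supp a E₁ hF) hx
  have hDfin : D.Finite := ((supp_finite E₁).finite_subsets).subset hDsub
  have hPfin : {t | t ⊆ D}.Finite := hDfin.finite_subsets
  have hmap : ∀ S ∈ {S | ∃ (a : α) (w : List α), S = aderivWord (a :: w) E₁.star},
      ∃ U : Set (Set (RegularExpression α)), U ⊆ D ∧ S = (· * E₁.star) '' ⋃₀ U := by
    rintro S ⟨a, w, rfl⟩
    obtain ⟨U, hU1, hU2⟩ := star_structure E₁ a w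
    exact ⟨U, fun T hT => hU1 T hT, hU2⟩
  choose! f hf1 hf2 using hmap
  have hle := Set.ncard_le_ncard_of_injOn f (fun S hS => hf1 S hS)
    (fun S hS S' hS' hff => by rw [hf2 S hS, hf2 S' hS', hff]) hPfin
  calc {S | ∃ (a : α) (w : List α), S = aderivWord (a :: w) E₁.star}.ncard
      ≤ {t | t ⊆ D}.ncard := hle
    _ = 2 ^ D.ncard := ncard_subsets hDfin
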